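/- Let F be a p-adic field with p not dividing |G| for a finite abelian group G. Then the unit group (O_{F^c}[G])^× of the integral group algebra over the ring of integers of the algebraic closure equals Hom(ℤ[Ĝ], O_{F^c}^×) under the character-evaluation identification of (F^c[G])^× with Hom(ℤ[Ĝ], (F^c)^×). -/

import Mathlib

open Finset
open scoped Classical

section Aux

variable {C : Type*} [Field C] [IsAlgClosed C] [CharZero C]
variable {G : Type*} [CommGroup G] [Fintype G] [Fintype (G →* Cˣ)]

omit [IsAlgClosed C] [Fintype (G →* Cˣ)] in
private lemma exponent_neZero : NeZero ((Monoid.exponent G : C)) :=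
  ⟨Nat.cast_ne_zero.mpr Monoid.exponent_ne_zero_of_finite⟩

omit [IsAlgClosed C] [Fintype (G →* Cˣ)] in
/-- Orthogonality: sum over the group of one character. -/
private lemma sum_over_G (χ : G →* Cˣ) :
    ∑ s : G, ((χ s : Cˣ) : C) = if χ = 1 then (Fintype.card G : C) else 0 := by
  split_ifs with h
  · subst h; simp
  · obtain ⟨t, ht⟩ : ∃ t : G, ((χ t : Cˣ) : C) ≠ 1 := by
      by_contra hc
      push_neg at hc
      exact h (MonoidHom.ext fun t => Units.ext (by simpa using hc t))
    set S := ∑ s : G, ((χ s : Cˣ) : C) with hS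
    have hmul : ((χ t : Cˣ) : C) * S = S := by
      rw [hS, Finset.mul_sum]
      calc ∑ s : G, ((χ t : Cˣ) : C) * ((χ s : Cˣ) : C)
          = ∑ s : G, ((χ (t * s) : Cˣ) : C) := by simp [map_mul]
        _ = ∑ s : G, ((χ s : Cˣ) : C) := Equiv.sum_comp (Equiv.mulLeft t) fun s => ((χ s : Cˣ) : C)
    have h0 : (((χ t : Cˣ) : C) - 1) * S = 0 := by
      rw [sub_mul, one_mul, hmul, sub_self]
    exact (mul_eq_zero.mp h0).resolve_left (sub_ne_zero.mpr ht)

/-- Orthogonality: sum over the characters at one element. -/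
private lemma sum_over_chars (s : G) :
    ∑ χ : G →* Cˣ, ((χ s : Cˣ) : C) = if s = 1 then (Fintype.card (G →* Cˣ) : C) else 0 := by
  haveI := (exponent_neZero (C := C) (G := G))
  split_ifs with h
  · subst h; simp
  · obtain ⟨ψ, hψ⟩ := CommGroup.exists_apply_ne_one_of_hasEnoughRootsOfUnity G C h
    have hψ' : ((ψ s : Cˣ) : C) ≠ 1 := fun hc => hψ (Units.ext (by simpa using hc))
    set S := ∑ χ : G →* Cˣ, ((χ s : Cˣ) : C) with hS
    have hmul : ((ψ s : Cˣ) : C) * S = S := by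
      rw [hS, Finset.mul_sum]
      calc ∑ χ : G →* Cˣ, ((ψ s : Cˣ) : C) * ((χ s : Cˣ) : C)
          = ∑ χ : G →* Cˣ, (((ψ * χ) s : Cˣ) : C) := by simp
        _ = ∑ χ : G →* Cˣ, ((χ s : Cˣ) : C) :=
            Equiv.sum_comp (Equiv.mulLeft ψ) fun χ : G →* Cˣ => ((χ s : Cˣ) : C)
    have h0 : (((ψ s : Cˣ) : C) - 1) * S = 0 := by
      rw [sub_mul, one_mul, hmul, sub_self]
    exact (mul_eq_zero.mp h0).resolve_left (sub_ne_zero.mpr hψ')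

private lemma card_chars : Fintype.card (G →* Cˣ) = Fintype.card G := by
  haveI := (exponent_neZero (C := C) (G := G))
  obtain ⟨e⟩ := CommGroup.monoidHom_mulEquiv_of_hasEnoughRootsOfUnity G C
  exact Fintype.card_congr e.toEquiv

/-- Orthogonality over characters, two-variable form. -/
private lemma orth_chars (s t : G) :
    ∑ χ : G →* Cˣ, ((χ s : Cˣ) : C) * (((χ t)⁻¹ : Cˣ) : C) =
      if s = t then (Fintype.card G : C) else 0 := by
  have key : ∀ χ : G →* Cˣ, ((χ s : Cˣ) : C) * (((χ t)⁻¹ : Cˣ) : C) =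
      ((χ (s * t⁻¹) : Cˣ) : C) := by
    intro χ; simp [map_mul]
  rw [Finset.sum_congr rfl fun χ _ => key χ, sum_over_chars (s * t⁻¹),
    card_chars (C := C) (G := G)]
  exact if_congr mul_inv_eq_one rfl rfl

omit [IsAlgClosed C] [Fintype (G →* Cˣ)] in
/-- Orthogonality over the group, two-variable form. -/
private lemma orth_G (χ ψ : G →* Cˣ) :
    ∑ s : G, ((χ s : Cˣ) : C) * (((ψ s)⁻¹ : Cˣ) : C) =
      if χ = ψ then (Fintype.card G : C) else 0 := by
  have key : ∀ s : G, ((χ s : Cˣ) : C) * (((ψ s)⁻¹ : Cˣ) : C) = (((χ * ψ⁻¹) s : Cˣ) : C) := by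
    intro s; simp
  rw [Finset.sum_congr rfl fun s _ => key s, sum_over_G (χ * ψ⁻¹)]
  exact if_congr (mul_inv_eq_one (a := χ) (b := ψ)) rfl rfl

end Aux

/-- Let `C` be an algebraically closed field of characteristic `0` equipped
with a valuation subring `O` (the valuation ring of `F^c` for a `p`-adic field `F`), and `G` a
finite abelian group whose order is a unit in `O` (i.e. `p ∤ |G|`).  Under the identification
of `(C[G])ˣ` with `Hom(ℤ[Ĝ], Cˣ)` by character evaluation, the units of `O[G]` are exactly the
homomorphisms with values in `Oˣ`: a family `φ : Ĝ → Cˣ` has all values and inverse values in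
`O` iff it is the character-evaluation of a unit of `O[G]`. -/
theorem stmt10 (C : Type*) [Field C] [IsAlgClosed C] [CharZero C]
    (O : ValuationSubring C)
    (G : Type*) [CommGroup G] [Fintype G] [Fintype (G →* Cˣ)]
    (hG : IsUnit ((Fintype.card G : ℕ) : O))
    (φ : (G →* Cˣ) → Cˣ) :
    (∀ χ : G →* Cˣ, ((φ χ : Cˣ) : C) ∈ O ∧ (((φ χ)⁻¹ : Cˣ) : C) ∈ O) ↔
      ∃ u : (MonoidAlgebra O G)ˣ, ∀ χ : G →* Cˣ,
        ((φ χ : Cˣ) : C) = ∑ s : G, (((u : MonoidAlgebra O G).coeff s : O) : C) * (χ s : C) := by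
  classical
  set n := Fintype.card G with hncard
  have hn0 : (n : C) ≠ 0 := Nat.cast_ne_zero.mpr Fintype.card_ne_zero
  -- roots of unity lie in O
  have rootMem : ∀ y : C, y ^ n = 1 → y ∈ O := by
    intro y hy
    rcases O.mem_or_inv_mem y with hmem | hmem
    · exact hmem
    · have hn1 : n - 1 + 1 = n := Nat.sub_add_cancel Fintype.card_pos
      have h1 : y ^ (n - 1) * y = 1 := by
        rw [← pow_succ, hn1, hy]
      have hyy : y = (y⁻¹) ^ (n - 1) := by
        rw [inv_pow]
        exact (inv_eq_of_mul_eq_one_right h1).symm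
      rw [hyy]
      exact pow_mem hmem _
  have chiMem : ∀ (χ : G →* Cˣ) (s : G), ((χ s : Cˣ) : C) ∈ O ∧ (((χ s)⁻¹ : Cˣ) : C) ∈ O := by
    intro χ s
    constructor
    · refine rootMem _ ?_
      have h1 : (χ s) ^ n = 1 := by rw [← map_pow, pow_card_eq_one, map_one]
      rw [← Units.val_pow_eq_pow_val, h1, Units.val_one]
    · refine rootMem _ ?_
      have h1 : ((χ s)⁻¹) ^ n = 1 := by
        rw [inv_pow, ← map_pow, pow_card_eq_one, map_one, inv_one]
      rw [← Units.val_pow_eq_pow_val, h1, Units.val_one]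
  -- inverse of n in O
  obtain ⟨w, hw⟩ := hG
  have hwC : ((w : O) : C) = (n : C) := by rw [hw]; simp
  have hninv : ((n : C))⁻¹ ∈ O := by
    have h2 : ((w : O) * ((w⁻¹ : Oˣ) : O)) = (1 : O) := by
      rw [← Units.val_mul, mul_inv_cancel, Units.val_one]
    have hmul : (n : C) * (((w⁻¹ : Oˣ) : O) : C) = 1 := by
      rw [← hwC]
      calc ((w : O) : C) * (((w⁻¹ : Oˣ) : O) : C)
          = (((w : O) * ((w⁻¹ : Oˣ) : O) : O) : C) := by norm_cast
        _ = 1 := by rw [h2]; simp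
    rw [(inv_eq_of_mul_eq_one_right hmul)]
    exact SetLike.coe_mem _
  -- evaluation ring homomorphisms
  let E : (G →* Cˣ) → (MonoidAlgebra O G →+* C) := fun χ =>
    MonoidAlgebra.liftNCRingHom (SubringClass.subtype O) ((Units.coeHom C).comp χ)
      (fun _ _ => Commute.all _ _)
  have Esingle : ∀ (χ : G →* Cˣ) (s : G) (c : O),
      E χ (MonoidAlgebra.single s c) = (c : C) * ((χ s : Cˣ) : C) :=
    fun χ s c => MonoidAlgebra.liftNC_single _ _ _ _
  have Eapp : ∀ (χ : G →* Cˣ) (x : MonoidAlgebra O G),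
      E χ x = ∑ s : G, ((x.coeff s : O) : C) * ((χ s : Cˣ) : C) := by
    intro χ x
    conv_lhs => rw [← MonoidAlgebra.sum_coeff_single x, map_finsuppSum]
    rw [Finsupp.sum_fintype]
    · exact Finset.sum_congr rfl fun s _ => Esingle χ s (x.coeff s)
    · intro s
      rw [show (MonoidAlgebra.single s (0 : O) : MonoidAlgebra O G) = 0 from MonoidAlgebra.single_zero s,
        map_zero]
  -- injectivity of joint evaluation
  have Einj : ∀ x y : MonoidAlgebra O G, (∀ χ : G →* Cˣ, E χ x = E χ y) → x = y := by
    intro x y hxy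
    have key : ∀ z : MonoidAlgebra O G, ∀ t : G,
        ∑ χ : G →* Cˣ, E χ z * (((χ t)⁻¹ : Cˣ) : C) = (n : C) * ((z.coeff t : O) : C) := by
      intro z t
      calc ∑ χ : G →* Cˣ, E χ z * (((χ t)⁻¹ : Cˣ) : C)
          = ∑ χ : G →* Cˣ, ∑ s : G, ((z.coeff s : O) : C) *
              (((χ s : Cˣ) : C) * (((χ t)⁻¹ : Cˣ) : C)) := by
            refine Finset.sum_congr rfl fun χ _ => ?_
            rw [Eapp, Finset.sum_mul]
            exact Finset.sum_congr rfl fun s _ => by ring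
        _ = ∑ s : G, ((z.coeff s : O) : C) *
              ∑ χ : G →* Cˣ, ((χ s : Cˣ) : C) * (((χ t)⁻¹ : Cˣ) : C) := by
            rw [Finset.sum_comm]
            exact Finset.sum_congr rfl fun s _ => by rw [Finset.mul_sum]
        _ = ∑ s : G, ((z.coeff s : O) : C) * (if s = t then (n : C) else 0) := by
            exact Finset.sum_congr rfl fun s _ => by rw [orth_chars]
        _ = ∑ s : G, (if s = t then ((z.coeff s : O) : C) * (n : C) else 0) := by
            exact Finset.sum_congr rfl fun s _ => by rw [mul_ite, mul_zero]
        _ = (n : C) * ((z.coeff t : O) : C) := by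
            rw [Finset.sum_ite_eq' Finset.univ t fun s => ((z.coeff s : O) : C) * (n : C)]
            simp [mul_comm]
    ext t
    have h1 := key x t
    rw [Finset.sum_congr rfl fun χ _ => by rw [hxy χ]] at h1
    have h3 := h1.symm.trans (key y t)
    exact mul_left_cancel₀ hn0 h3
  -- Fourier inversion evaluation formula
  have evalGen : ∀ (c : (G →* Cˣ) → C) (χ : G →* Cˣ),
      ∑ t : G, ((n : C)⁻¹ * ∑ ψ : G →* Cˣ, c ψ * (((ψ t)⁻¹ : Cˣ) : C)) * ((χ t : Cˣ) : C)
        = c χ := by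
    intro c χ
    calc ∑ t : G, ((n : C)⁻¹ * ∑ ψ : G →* Cˣ, c ψ * (((ψ t)⁻¹ : Cˣ) : C)) * ((χ t : Cˣ) : C)
        = ∑ t : G, ∑ ψ : G →* Cˣ, (n : C)⁻¹ *
            (c ψ * (((χ t : Cˣ) : C) * (((ψ t)⁻¹ : Cˣ) : C))) := by
          refine Finset.sum_congr rfl fun t _ => ?_
          rw [Finset.mul_sum, Finset.sum_mul]
          exact Finset.sum_congr rfl fun ψ _ => by ring
      _ = ∑ ψ : G →* Cˣ, (n : C)⁻¹ *
            (c ψ * ∑ t : G, ((χ t : Cˣ) : C) * (((ψ t)⁻¹ : Cˣ) : C)) := by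
          rw [Finset.sum_comm]
          refine Finset.sum_congr rfl fun ψ _ => ?_
          rw [Finset.mul_sum, Finset.mul_sum]
      _ = ∑ ψ : G →* Cˣ, (if χ = ψ then (n : C)⁻¹ * (c ψ * (n : C)) else 0) := by
          refine Finset.sum_congr rfl fun ψ _ => ?_
          rw [orth_G, mul_ite, mul_ite, mul_zero, mul_zero]
      _ = (n : C)⁻¹ * (c χ * (n : C)) := by
          rw [Finset.sum_ite_eq Finset.univ χ fun ψ => (n : C)⁻¹ * (c ψ * (n : C))]
          simp
      _ = c χ := by field_simp
  constructor
  · -- forward: construct the unit by Fourier inversion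
    intro h
    set A : G → C := fun t =>
      (n : C)⁻¹ * ∑ χ : G →* Cˣ, ((φ χ : Cˣ) : C) * (((χ t)⁻¹ : Cˣ) : C) with hA
    set B : G → C := fun t =>
      (n : C)⁻¹ * ∑ χ : G →* Cˣ, (((φ χ)⁻¹ : Cˣ) : C) * (((χ t)⁻¹ : Cˣ) : C) with hB
    have hAmem : ∀ t, A t ∈ O := fun t =>
      mul_mem hninv (sum_mem fun χ _ => mul_mem (h χ).1 (chiMem χ t).2)
    have hBmem : ∀ t, B t ∈ O := fun t =>
      mul_mem hninv (sum_mem fun χ _ => mul_mem (h χ).2 (chiMem χ t).2)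
    set a : MonoidAlgebra O G := MonoidAlgebra.ofCoeff (Finsupp.equivFunOnFinite.symm fun t => (⟨A t, hAmem t⟩ : O))
      with ha
    set b : MonoidAlgebra O G := MonoidAlgebra.ofCoeff (Finsupp.equivFunOnFinite.symm fun t => (⟨B t, hBmem t⟩ : O))
      with hb
    have hacoe : ∀ t, ((a.coeff t : O) : C) = A t := fun t => by simp [ha]
    have hbcoe : ∀ t, ((b.coeff t : O) : C) = B t := fun t => by simp [hb]
    have hEa : ∀ χ : G →* Cˣ, E χ a = ((φ χ : Cˣ) : C) := by
      intro χ
      rw [Eapp]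
      simp only [hacoe, hA]
      exact evalGen (fun ψ => ((φ ψ : Cˣ) : C)) χ
    have hEb : ∀ χ : G →* Cˣ, E χ b = (((φ χ)⁻¹ : Cˣ) : C) := by
      intro χ
      rw [Eapp]
      simp only [hbcoe, hB]
      exact evalGen (fun ψ => (((φ ψ)⁻¹ : Cˣ) : C)) χ
    have hab : a * b = 1 := by
      refine Einj (a * b) 1 fun χ => ?_
      rw [map_mul, hEa, hEb, map_one, ← Units.val_mul, mul_inv_cancel, Units.val_one]
    refine ⟨⟨a, b, hab, by rw [mul_comm]; exact hab⟩, fun χ => ?_⟩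
    show ((φ χ : Cˣ) : C) = ∑ s : G, ((a.coeff s : O) : C) * ((χ s : Cˣ) : C)
    rw [← Eapp, hEa]
  · -- reverse: values of a unit are integral with integral inverses
    rintro ⟨u, hu⟩ χ
    have hEu : E χ (u : MonoidAlgebra O G) = ((φ χ : Cˣ) : C) := by
      rw [Eapp]; exact (hu χ).symm
    constructor
    · rw [hu χ]
      exact sum_mem fun s _ => mul_mem (SetLike.coe_mem _) (chiMem χ s).1
    · have hmul : E χ (u : MonoidAlgebra O G) * E χ ((u⁻¹ : (MonoidAlgebra O G)ˣ) :
          MonoidAlgebra O G) = 1 := by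
        rw [← map_mul, ← Units.val_mul, mul_inv_cancel, Units.val_one, map_one]
      have hinv : (((φ χ)⁻¹ : Cˣ) : C) =
          E χ ((u⁻¹ : (MonoidAlgebra O G)ˣ) : MonoidAlgebra O G) := by
        rw [Units.val_inv_eq_inv_val]
        rw [hEu] at hmul
        exact inv_eq_of_mul_eq_one_right hmul
      rw [hinv, Eapp]
      exact sum_mem fun s _ => mul_mem (SetLike.coe_mem _) (chiMem χ s).1
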